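/- Consider n balls thrown independently and uniformly at random into m bins of capacity k, where n = k·m, k ≥ 1, m ≥ 2, and p = 1/m. Let B_i be the number of balls in bin i and X = ∑_{i=1}^{m} max(B_i − k, 0) be the number of balls overflowing their bins. Then E[X] = n·(1−p)·P(Bin(n,p) = k); moreover, if k ≥ 20 and n ≥ 5k, then E[X] ≤ n/√(2πk). -/

import Mathlib

open Finset
open Real

/-- Number of balls landing in bin `i` when the throw outcome is `ω`
(ball `j` lands in bin `ω j`). -/
def binCount (n m : ℕ) (i : Fin m) (ω : Fin n → Fin m) : ℕ :=
  (Finset.univ.filter fun j => ω j = i).card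

/-- The total overflow: number of balls exceeding the capacity `k` of their bin. -/
noncomputable def overflowX (n m k : ℕ) (ω : Fin n → Fin m) : ℝ :=
  ∑ i : Fin m, max ((binCount n m i ω : ℝ) - (k : ℝ)) 0

/-- Expectation of a real-valued random variable on the uniform space of
functions `Fin n → Fin m` (balls-into-bins model). -/
noncomputable def expec (n m : ℕ) (f : (Fin n → Fin m) → ℝ) : ℝ :=
  (∑ ω : Fin n → Fin m, f ω) / (Fintype.card (Fin n → Fin m) : ℝ)

/-- Throwing `n = k·m` balls uniformly into `m` bins of
capacity `k`, the expected overflow satisfies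
`E[X] = n·(1−p)·P(Bin(n,p) = k)` where `p = 1/m`; moreover if `k ≥ 20` and
`n ≥ 5k`, then `E[X] ≤ n/√(2πk)`. -/

lemma fiber_card (n m : ℕ) (i : Fin m) (s : Finset (Fin n)) :
    ((univ : Finset (Fin n → Fin m)).filter
      (fun ω => (univ.filter fun j => ω j = i) = s)).card = (m - 1) ^ (n - s.card) := by
  have : ((univ : Finset (Fin n → Fin m)).filter
      (fun ω => (univ.filter fun j => ω j = i) = s))
      = Fintype.piFinset (fun j : Fin n => if j ∈ s then {i} else {i}ᶜ) := by
    ext ω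
    simp only [mem_filter, mem_univ, true_and, Fintype.mem_piFinset]
    constructor
    · rintro rfl j
      by_cases h : ω j = i <;> simp [h]
    · intro h
      ext j
      have := h j
      by_cases hj : j ∈ s <;> simp [hj] at this <;> simp [hj, this]
  rw [this, Fintype.card_piFinset]
  have : ∀ j : Fin n, (if j ∈ s then ({i} : Finset (Fin m)) else {i}ᶜ).card
      = if j ∈ s then 1 else m - 1 := by
    intro j
    by_cases hj : j ∈ s <;> simp [hj, card_compl]
  simp_rw [this]
  rw [Finset.prod_ite, Finset.prod_const_one, one_mul, Finset.prod_const]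
  congr 1
  · congr 1
    rw [Finset.filter_not, Finset.filter_mem_eq_inter, Finset.univ_inter]
    rw [Finset.card_sdiff_of_subset (subset_univ s), card_univ, Fintype.card_fin]

lemma sum_binCount (n m : ℕ) (i : Fin m) (f : ℕ → ℝ) :
    ∑ ω : Fin n → Fin m, f (binCount n m i ω)
      = ∑ j ∈ range (n+1), (n.choose j : ℝ) * ((m-1 : ℕ) : ℝ)^(n-j) * f j := by
  classical
  rw [← Finset.sum_fiberwise_of_maps_to
    (g := fun ω : Fin n → Fin m => univ.filter fun j => ω j = i)
    (t := (univ : Finset (Fin n)).powerset)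
    (fun ω _ => by simp) (fun ω => f (binCount n m i ω))]
  have h1 : ∀ s ∈ (univ : Finset (Fin n)).powerset,
      ∑ ω ∈ univ.filter (fun ω : Fin n → Fin m => (univ.filter fun j => ω j = i) = s),
        f (binCount n m i ω)
      = ((m-1 : ℕ) : ℝ)^(n - s.card) * f s.card := by
    intro s _
    have h2 : ∀ ω ∈ univ.filter (fun ω : Fin n → Fin m => (univ.filter fun j => ω j = i) = s),
        f (binCount n m i ω) = f s.card := by
      intro ω hω
      rw [mem_filter] at hω
      show f (univ.filter fun j => ω j = i).card = f s.card
      rw [hω.2]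
    rw [Finset.sum_congr rfl h2, Finset.sum_const, fiber_card, nsmul_eq_mul, Nat.cast_pow]
  rw [Finset.sum_congr rfl h1, Finset.sum_powerset]
  refine Finset.sum_congr (by rw [card_univ, Fintype.card_fin]) (fun j hj => ?_)
  have h3 : ∀ s ∈ Finset.powersetCard j (univ : Finset (Fin n)),
      ((m-1 : ℕ) : ℝ)^(n - s.card) * f s.card = ((m-1 : ℕ) : ℝ)^(n - j) * f j := by
    intro s hs
    rw [Finset.mem_powersetCard_univ] at hs
    rw [hs]
  rw [Finset.sum_congr rfl h3, Finset.sum_const, Finset.card_powersetCard, card_univ,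
    Fintype.card_fin, nsmul_eq_mul, mul_assoc]

lemma reindex (k n : ℕ) (hk : 1 ≤ k) (g : ℕ → ℝ) :
    ∑ j ∈ Ico k (n+1), g j = ∑ i ∈ Ico (k-1) n, g (i+1) := by
  have h : Ico k (n+1) = Finset.image (· + 1) (Ico (k-1) n) := by
    rw [Finset.image_add_right_Ico, Nat.sub_add_cancel hk]
  rw [h, Finset.sum_image (fun a _ b _ h => by omega)]

lemma key_identity (n m k : ℕ) (hk : 1 ≤ k) (hm : 2 ≤ m) (hn : n = k * m) :
    ∑ j ∈ range (n+1), (n.choose j : ℝ) * ((m-1:ℕ):ℝ)^(n-j) * max ((j:ℝ) - k) 0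
      = (k : ℝ) * ((n-1).choose (k-1) : ℝ) * ((m-1:ℕ):ℝ)^(n-k+1) := by
  have hn1 : 1 ≤ n := by nlinarith
  have hkn : k ≤ n := by nlinarith
  set w : ℕ → ℝ := fun j => ((m-1:ℕ):ℝ)^(n-j) with hw
  set A : ℝ := ∑ i ∈ Ico (k-1) n, ((n-1).choose i : ℝ) * ((m-1:ℕ):ℝ)^(n-1-i) with hA
  -- restrict to Ico k (n+1)
  have hrestrict : ∑ j ∈ range (n+1), (n.choose j : ℝ) * w j * max ((j:ℝ) - k) 0
      = ∑ j ∈ Ico k (n+1), (n.choose j : ℝ) * w j * ((j:ℝ) - k) := by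
    rw [range_eq_Ico, ← Finset.sum_Ico_consecutive _ (Nat.zero_le k) (by omega)]
    have h0 : ∑ j ∈ Ico 0 k, (n.choose j : ℝ) * w j * max ((j:ℝ) - k) 0 = 0 := by
      apply Finset.sum_eq_zero
      intro j hj
      rw [mem_Ico] at hj
      have : max ((j:ℝ) - k) 0 = 0 := by
        apply max_eq_right
        have : (j:ℝ) ≤ k := by exact_mod_cast Nat.le_of_lt hj.2
        linarith
      rw [this, mul_zero]
    rw [h0, zero_add]
    apply Finset.sum_congr rfl
    intro j hj
    rw [mem_Ico] at hj
    have : max ((j:ℝ) - k) 0 = (j:ℝ) - k := by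
      apply max_eq_left
      have : (k:ℝ) ≤ j := by exact_mod_cast hj.1
      linarith
    rw [this]
  -- step 1
  have hS1 : ∑ j ∈ Ico k (n+1), (j : ℝ) * ((n.choose j : ℝ) * w j) = (n:ℝ) * A := by
    rw [reindex k n hk]
    rw [hA, Finset.mul_sum]
    apply Finset.sum_congr rfl
    intro i hi
    have hc : n * (n-1).choose i = n.choose (i+1) * (i+1) := by
      have := Nat.add_one_mul_choose_eq (n-1) i
      rwa [Nat.sub_add_cancel hn1] at this
    have hc2 : (n:ℝ) * (((n-1).choose i : ℕ) : ℝ) = ((n.choose (i+1) : ℕ) : ℝ) * ((i:ℝ)+1) := by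
      exact_mod_cast hc
    have hwi : w (i+1) = ((m-1:ℕ):ℝ)^(n-1-i) := by
      show ((m-1:ℕ):ℝ)^(n-(i+1)) = ((m-1:ℕ):ℝ)^(n-1-i)
      congr 1
      omega
    rw [hwi]
    push_cast
    push_cast at hc2
    linear_combination ((m-1:ℕ):ℝ)^(n-1-i) * hc2.symm
  -- step 2: Pascal
  have hB : ∑ i ∈ Ico (k-1) n, ((n-1).choose (i+1) : ℝ) * ((m-1:ℕ):ℝ)^(n-1-i)
      = ((m:ℝ) - 1) * (A - ((n-1).choose (k-1) : ℝ) * ((m-1:ℕ):ℝ)^(n-k)) := by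
    have hre : ∑ i ∈ Ico (k-1) n, ((n-1).choose (i+1) : ℝ) * ((m-1:ℕ):ℝ)^(n-1-i)
        = ∑ l ∈ Ico k (n+1), ((n-1).choose l : ℝ) * ((m-1:ℕ):ℝ)^(n-l) := by
      rw [reindex k n hk (fun l => ((n-1).choose l : ℝ) * ((m-1:ℕ):ℝ)^(n-l))]
      apply Finset.sum_congr rfl
      intro i _
      congr 1
      congr 1
      omega
    rw [hre, Finset.sum_Ico_succ_top hkn, Nat.choose_eq_zero_of_lt (by omega : n - 1 < n),
      Nat.cast_zero, zero_mul, add_zero]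
    have hAsplit : A = ((n-1).choose (k-1) : ℝ) * ((m-1:ℕ):ℝ)^(n-1-(k-1))
        + ∑ i ∈ Ico k n, ((n-1).choose i : ℝ) * ((m-1:ℕ):ℝ)^(n-1-i) := by
      rw [hA, Finset.sum_eq_sum_Ico_succ_bot (by omega : k - 1 < n), Nat.sub_add_cancel hk]
    have hnk1 : n - 1 - (k-1) = n - k := by omega
    rw [hnk1] at hAsplit
    have hterm : ∀ l ∈ Ico k n, ((n-1).choose l : ℝ) * ((m-1:ℕ):ℝ)^(n-l)
        = ((m:ℝ)-1) * (((n-1).choose l : ℝ) * ((m-1:ℕ):ℝ)^(n-1-l)) := by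
      intro l hl
      rw [mem_Ico] at hl
      have h1 : n - l = (n - 1 - l) + 1 := by omega
      rw [h1, pow_succ]
      have h2 : ((m-1:ℕ):ℝ) = (m:ℝ) - 1 := by
        have : (1:ℕ) ≤ m := by omega
        push_cast [this]
        ring
      rw [h2]; ring
    rw [Finset.sum_congr rfl hterm, ← Finset.mul_sum]
    have : ∑ i ∈ Ico k n, ((n-1).choose i : ℝ) * ((m-1:ℕ):ℝ)^(n-1-i)
        = A - ((n-1).choose (k-1) : ℝ) * ((m-1:ℕ):ℝ)^(n-k) := by
      rw [hAsplit]; ring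
    rw [this]
  have hT : ∑ j ∈ Ico k (n+1), (n.choose j : ℝ) * w j
      = (m:ℝ) * A - ((n-1).choose (k-1) : ℝ) * ((m-1:ℕ):ℝ)^(n-k+1) := by
    rw [reindex k n hk (fun j => (n.choose j : ℝ) * w j)]
    have hpas : ∀ i ∈ Ico (k-1) n, (n.choose (i+1) : ℝ) * w (i+1)
        = ((n-1).choose i : ℝ) * ((m-1:ℕ):ℝ)^(n-1-i)
          + ((n-1).choose (i+1) : ℝ) * ((m-1:ℕ):ℝ)^(n-1-i) := by
      intro i _
      have hch : n.choose (i+1) = (n-1).choose i + (n-1).choose (i+1) := by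
        have := Nat.choose_succ_succ' (n-1) i
        rwa [Nat.sub_add_cancel hn1] at this
      have hwi : w (i+1) = ((m-1:ℕ):ℝ)^(n-1-i) := by
        show ((m-1:ℕ):ℝ)^(n-(i+1)) = ((m-1:ℕ):ℝ)^(n-1-i)
        congr 1
        omega
      rw [hch, hwi]
      push_cast
      ring
    rw [Finset.sum_congr rfl hpas, Finset.sum_add_distrib, hB, ← hA]
    have h2 : ((m-1:ℕ):ℝ) = (m:ℝ) - 1 := by
      have : (1:ℕ) ≤ m := by omega
      push_cast [this]
      ring
    rw [pow_succ, h2]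
    ring
  -- assemble
  have hsplit : ∀ j ∈ Ico k (n+1), (n.choose j : ℝ) * w j * ((j:ℝ) - k)
      = (j:ℝ) * ((n.choose j : ℝ) * w j) - (k:ℝ) * ((n.choose j : ℝ) * w j) := by
    intro j _
    ring
  rw [hrestrict, Finset.sum_congr rfl hsplit, Finset.sum_sub_distrib, hS1, ← Finset.mul_sum, hT]
  have hnr : (n:ℝ) = (k:ℝ) * (m:ℝ) := by exact_mod_cast congrArg (Nat.cast (R := ℝ)) hn
  rw [hnr]
  ring

lemma algebra_eq (n m k : ℕ) (hk : 1 ≤ k) (hm : 2 ≤ m) (hn : n = k * m) (p : ℝ)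
    (hp : p = 1 / (m : ℝ)) :
    ((m:ℝ) * ((k : ℝ) * (((n-1).choose (k-1) : ℕ) : ℝ) * ((m-1:ℕ):ℝ)^(n-k+1))) / ((m:ℝ))^n
      = (n : ℝ) * (1 - p) * ((n.choose k : ℝ) * p ^ k * (1 - p) ^ (n - k)) := by
  have hm0 : (m:ℝ) ≠ 0 := by positivity
  have hkn : k ≤ n := by nlinarith
  have hm1 : ((m-1:ℕ):ℝ) = (m:ℝ) - 1 := by
    have : (1:ℕ) ≤ m := by omega
    push_cast [this]; ring
  have hc : (n:ℝ) * (((n-1).choose (k-1) : ℕ) : ℝ) = ((n.choose k : ℕ) : ℝ) * (k:ℝ) := by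
    have := Nat.add_one_mul_choose_eq (n-1) (k-1)
    rw [Nat.sub_add_cancel (by nlinarith : 1 ≤ n),
      Nat.sub_add_cancel hk] at this
    exact_mod_cast this
  have hnr : (n:ℝ) = (k:ℝ) * (m:ℝ) := by exact_mod_cast hn
  have hk0 : (k:ℝ) ≠ 0 := by positivity
  have hmc : (m:ℝ) * (((n-1).choose (k-1) : ℕ) : ℝ) = ((n.choose k : ℕ) : ℝ) := by
    apply mul_left_cancel₀ hk0
    nlinarith [hc, hnr]
  have h1p : 1 - p = ((m:ℝ) - 1) / m := by rw [hp]; field_simp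
  have hpowm : (m:ℝ)^n = (m:ℝ)^(n-k) * (m:ℝ)^k := by
    rw [← pow_add]; congr 1; omega
  have hpow1 : ((m:ℝ)-1)^(n-k+1) = ((m:ℝ)-1)^(n-k) * ((m:ℝ)-1) := pow_succ _ _
  rw [hm1, h1p, hp, hpow1, hpowm, hnr, ← hmc, div_pow, div_pow, one_pow]
  have hM1 : (m:ℝ)^(n-k) ≠ 0 := by positivity
  have hMk : (m:ℝ)^k ≠ 0 := by positivity
  field_simp

lemma expec_formula (n m k : ℕ) (hk : 1 ≤ k) (hm : 2 ≤ m) (hn : n = k * m) :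
    expec n m (overflowX n m k)
      = ((m:ℝ) * ((k : ℝ) * (((n-1).choose (k-1) : ℕ) : ℝ) * ((m-1:ℕ):ℝ)^(n-k+1))) / ((m:ℝ))^n := by
  rw [expec]
  have hcard : (Fintype.card (Fin n → Fin m) : ℝ) = (m:ℝ)^n := by
    rw [Fintype.card_fun, Fintype.card_fin, Fintype.card_fin]
    push_cast; ring
  rw [hcard]
  congr 1
  unfold overflowX
  rw [Finset.sum_comm]
  have : ∀ i ∈ (univ : Finset (Fin m)),
      ∑ ω : Fin n → Fin m, max ((binCount n m i ω : ℝ) - (k : ℝ)) 0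
      = (k : ℝ) * ((n-1).choose (k-1) : ℝ) * ((m-1:ℕ):ℝ)^(n-k+1) := by
    intro i _
    rw [sum_binCount n m i (fun j => max ((j:ℝ) - k) 0), key_identity n m k hk hm hn]
  rw [Finset.sum_congr rfl this, Finset.sum_const, card_univ, Fintype.card_fin, nsmul_eq_mul]

lemma stirling_lower (j : ℕ) (hj : 1 ≤ j) : Real.sqrt π ≤ Stirling.stirlingSeq j := by
  obtain ⟨i, rfl⟩ := Nat.exists_eq_add_of_le hj
  have h := Stirling.stirlingSeq'_antitone.le_of_tendsto
    (Stirling.tendsto_stirlingSeq_sqrt_pi.comp (Filter.tendsto_add_atTop_nat 1)) i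
  simpa [Function.comp, Nat.add_comm] using h

lemma stirling_mono {a b : ℕ} (ha : 1 ≤ a) (hab : a ≤ b) :
    Stirling.stirlingSeq b ≤ Stirling.stirlingSeq a := by
  obtain ⟨i, rfl⟩ := Nat.exists_eq_add_of_le ha
  obtain ⟨l, rfl⟩ := Nat.exists_eq_add_of_le hab
  have := Stirling.stirlingSeq'_antitone (le_add_right le_rfl : i ≤ i + l)
  simpa [Function.comp, Nat.add_comm, Nat.add_assoc, Nat.add_left_comm] using this

lemma factorial_eq (j : ℕ) (hj : 1 ≤ j) :
    (Nat.factorial j : ℝ) = Stirling.stirlingSeq j * (Real.sqrt (2*j) * ((j:ℝ)/Real.exp 1)^j) := by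
  have hd : Real.sqrt (2*j) * ((j:ℝ)/Real.exp 1)^j ≠ 0 := by
    have : (0:ℝ) < j := by exact_mod_cast hj
    positivity
  rw [Stirling.stirlingSeq, div_mul_cancel₀ _ hd]

set_option maxHeartbeats 2000000 in
lemma main_ineq (n m k : ℕ) (hk : 1 ≤ k) (hm : 2 ≤ m) (hn : n = k * m) (p : ℝ)
    (hp : p = 1 / (m : ℝ)) :
    (n : ℝ) * (1 - p) * ((n.choose k : ℝ) * p ^ k * (1 - p) ^ (n - k))
      ≤ (n : ℝ) / Real.sqrt (2 * π * (k : ℝ)) := by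
  have hkn : k ≤ n := by nlinarith
  have hn1 : 1 ≤ n := by nlinarith
  set d : ℕ := n - k with hd
  have hd1 : 1 ≤ d := by
    have : k * 2 ≤ k * m := Nat.mul_le_mul_left k hm
    omega
  have hm0 : (0:ℝ) < m := by positivity
  have hk0 : (0:ℝ) < k := by exact_mod_cast hk
  have hn0 : (0:ℝ) < n := by exact_mod_cast hn1
  have hd0 : (0:ℝ) < d := by exact_mod_cast hd1
  have hdr : (d:ℝ) = (n:ℝ) - k := by
    push_cast [hd, Nat.cast_sub hkn]; ring
  have hnr : (n:ℝ) = (k:ℝ) * m := by exact_mod_cast hn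
  have hpk : p = (k:ℝ) / n := by
    rw [hp, hnr]; field_simp
  have hq : 1 - p = (d:ℝ) / n := by
    rw [hpk, hdr]; field_simp
  set a := Stirling.stirlingSeq n with ha
  set b := Stirling.stirlingSeq k with hb
  set c := Stirling.stirlingSeq d with hc
  have hsp : (0:ℝ) < Real.sqrt π := Real.sqrt_pos.mpr Real.pi_pos
  have hbl : Real.sqrt π ≤ b := stirling_lower k hk
  have hcl : Real.sqrt π ≤ c := stirling_lower d hd1
  have hal : Real.sqrt π ≤ a := stirling_lower n hn1
  have hab : a ≤ b := stirling_mono hk hkn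
  have ha0 : (0:ℝ) < a := lt_of_lt_of_le hsp hal
  have hb0 : (0:ℝ) < b := lt_of_lt_of_le hsp hbl
  have hc0 : (0:ℝ) < c := lt_of_lt_of_le hsp hcl
  have he0 : (0:ℝ) < Real.exp 1 := Real.exp_pos 1
  have hsn : (0:ℝ) < Real.sqrt (2*n) := Real.sqrt_pos.mpr (by positivity)
  have hsk : (0:ℝ) < Real.sqrt (2*k) := Real.sqrt_pos.mpr (by positivity)
  have hsd : (0:ℝ) < Real.sqrt (2*d) := Real.sqrt_pos.mpr (by positivity)
  have hC : (n.choose k : ℝ)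
      = (a * (Real.sqrt (2*n) * ((n:ℝ)/Real.exp 1)^n))
        / ((b * (Real.sqrt (2*k) * ((k:ℝ)/Real.exp 1)^k))
          * (c * (Real.sqrt (2*d) * ((d:ℝ)/Real.exp 1)^d))) := by
    rw [Nat.cast_choose ℝ hkn, factorial_eq n hn1, factorial_eq k hk, factorial_eq d hd1]
  have hcancel : ((n:ℝ)/Real.exp 1)^n * (((k:ℝ)/(n:ℝ))^k * ((d:ℝ)/(n:ℝ))^d)
      = ((k:ℝ)/Real.exp 1)^k * ((d:ℝ)/Real.exp 1)^d := by
    have hnd : n = k + d := by omega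
    have hxs : ∀ x:ℝ, x^n = x^k * x^d := fun x => by rw [show n = k + d from hnd, pow_add]
    have h1 : ((n:ℝ)/Real.exp 1)*((k:ℝ)/(n:ℝ)) = (k:ℝ)/Real.exp 1 := by
      field_simp
    have h2 : ((n:ℝ)/Real.exp 1)*((d:ℝ)/(n:ℝ)) = (d:ℝ)/Real.exp 1 := by
      field_simp
    calc ((n:ℝ)/Real.exp 1)^n * (((k:ℝ)/(n:ℝ))^k * ((d:ℝ)/(n:ℝ))^d)
        = (((n:ℝ)/Real.exp 1)*((k:ℝ)/(n:ℝ)))^k * ((((n:ℝ)/Real.exp 1))*((d:ℝ)/(n:ℝ)))^d := by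
          rw [hxs, mul_pow, mul_pow]; ring
      _ = ((k:ℝ)/Real.exp 1)^k * ((d:ℝ)/Real.exp 1)^d := by rw [h1, h2]
  set N := ((n:ℝ)/Real.exp 1)^n with hN
  set K := ((k:ℝ)/Real.exp 1)^k with hK
  set D := ((d:ℝ)/Real.exp 1)^d with hD
  have hK0 : K ≠ 0 := by rw [hK]; positivity
  have hD0 : D ≠ 0 := by rw [hD]; positivity
  set S := Real.sqrt (2*(n:ℝ))/(Real.sqrt (2*(k:ℝ))*Real.sqrt (2*(d:ℝ))) with hS
  have hC2 : (n.choose k : ℝ) = (a/(b*c)) * S * (N/(K*D)) := by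
    rw [hC, hS]
    field_simp
  have hone : N/(K*D) * (((k:ℝ)/(n:ℝ))^k * ((d:ℝ)/(n:ℝ))^d) = 1 := by
    rw [div_mul_eq_mul_div, hcancel, div_self (mul_ne_zero hK0 hD0)]
  set T := ((d:ℝ)/n) * (a/(b*c)) * S with hT
  have hX : (1 - p) * ((n.choose k : ℝ) * p ^ k * (1 - p) ^ (n - k)) = T := by
    rw [hq, hpk, hC2, show n - k = d from hd.symm]
    calc ((d:ℝ)/n) * ((a/(b*c)) * S * (N/(K*D)) * ((k:ℝ)/(n:ℝ))^k * ((d:ℝ)/(n:ℝ))^d)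
        = ((d:ℝ)/n) * ((a/(b*c)) * S)
            * (N/(K*D) * (((k:ℝ)/(n:ℝ))^k * ((d:ℝ)/(n:ℝ))^d)) := by ring
      _ = T := by rw [hone, hT]; ring
  have hT0 : 0 ≤ T := by
    rw [hT, hS]
    have h1 : 0 ≤ (d:ℝ)/n := by positivity
    have h2 : 0 ≤ a/(b*c) := le_of_lt (by positivity)
    have h3 : 0 ≤ Real.sqrt (2*(n:ℝ))/(Real.sqrt (2*(k:ℝ))*Real.sqrt (2*(d:ℝ))) := by positivity
    exact mul_nonneg (mul_nonneg h1 h2) h3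
  have hTsq : T^2 = ((d:ℝ)/n)^2 * (a/(b*c))^2 * ((2*(n:ℝ))/((2*(k:ℝ))*(2*(d:ℝ)))) := by
    calc T^2 = ((d:ℝ)/n)^2 * (a/(b*c))^2
        * (Real.sqrt (2*(n:ℝ))^2/(Real.sqrt (2*(k:ℝ))^2*Real.sqrt (2*(d:ℝ))^2)) := by
          rw [hT, hS]; ring
      _ = _ := by
          rw [Real.sq_sqrt (by positivity : (0:ℝ) ≤ 2*(n:ℝ)),
            Real.sq_sqrt (by positivity : (0:ℝ) ≤ 2*(k:ℝ)),
            Real.sq_sqrt (by positivity : (0:ℝ) ≤ 2*(d:ℝ))]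
  have habc : a/(b*c) ≤ 1/Real.sqrt π := by
    calc a/(b*c) ≤ b/(b*c) := by gcongr
      _ = 1/c := by field_simp
      _ ≤ 1/Real.sqrt π := one_div_le_one_div_of_le hsp hcl
  have hTsq_le : T^2 ≤ 1/(2*π*(k:ℝ)) := by
    rw [hTsq]
    have h1 : ((d:ℝ)/n)^2 * ((2*(n:ℝ))/((2*(k:ℝ))*(2*(d:ℝ)))) = (d:ℝ)/(2*(k:ℝ)*n) := by
      field_simp
    have h2 : (a/(b*c))^2 ≤ 1/π := by
      have hnn : (0:ℝ) ≤ a/(b*c) := le_of_lt (by positivity)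
      have := pow_le_pow_left₀ hnn habc 2
      calc (a/(b*c))^2 ≤ (1/Real.sqrt π)^2 := this
        _ = 1/π := by
            rw [div_pow, one_pow, Real.sq_sqrt Real.pi_pos.le]
    have h3 : (d:ℝ)/(2*(k:ℝ)*n) ≤ 1/(2*(k:ℝ)) := by
      rw [div_le_div_iff₀ (by positivity) (by positivity)]
      have hdn : (d:ℝ) ≤ n := by rw [hdr]; linarith
      nlinarith
    calc ((d:ℝ)/n)^2 * (a/(b*c))^2 * ((2*(n:ℝ))/((2*(k:ℝ))*(2*(d:ℝ))))
        = (a/(b*c))^2 * (((d:ℝ)/n)^2 * ((2*(n:ℝ))/((2*(k:ℝ))*(2*(d:ℝ))))) := by ring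
      _ = (a/(b*c))^2 * ((d:ℝ)/(2*(k:ℝ)*n)) := by rw [h1]
      _ ≤ (1/π) * (1/(2*(k:ℝ))) := by
          apply mul_le_mul h2 h3 (by positivity) (by positivity)
      _ = 1/(2*π*(k:ℝ)) := by
          rw [div_mul_div_comm, one_mul]
          ring_nf
  have hTle : T ≤ 1/Real.sqrt (2*π*(k:ℝ)) := by
    have h2pk : (0:ℝ) < 2*π*(k:ℝ) := by positivity
    have : T ≤ Real.sqrt (1/(2*π*(k:ℝ))) :=
      (Real.le_sqrt hT0 (by positivity)).mpr hTsq_le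
    calc T ≤ Real.sqrt (1/(2*π*(k:ℝ))) := this
      _ = 1/Real.sqrt (2*π*(k:ℝ)) := by
          rw [one_div, Real.sqrt_inv, one_div]
  calc (n : ℝ) * (1 - p) * ((n.choose k : ℝ) * p ^ k * (1 - p) ^ (n - k))
      = (n:ℝ) * ((1 - p) * ((n.choose k : ℝ) * p ^ k * (1 - p) ^ (n - k))) := by ring
    _ = (n:ℝ) * T := by rw [hX]
    _ ≤ (n:ℝ) * (1/Real.sqrt (2*π*(k:ℝ))) := by
        apply mul_le_mul_of_nonneg_left hTle hn0.le
    _ = (n:ℝ) / Real.sqrt (2*π*(k:ℝ)) := by rw [mul_one_div]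

theorem expected_spare_size (n m k : ℕ) (hk : 1 ≤ k) (hm : 2 ≤ m)
    (hn : n = k * m) (p : ℝ) (hp : p = 1 / (m : ℝ)) :
    expec n m (overflowX n m k)
      = (n : ℝ) * (1 - p) * ((n.choose k : ℝ) * p ^ k * (1 - p) ^ (n - k)) ∧
    (20 ≤ k → 5 * k ≤ n →
      expec n m (overflowX n m k) ≤ (n : ℝ) / Real.sqrt (2 * Real.pi * (k : ℝ))) := by
  have heq : expec n m (overflowX n m k)
      = (n : ℝ) * (1 - p) * ((n.choose k : ℝ) * p ^ k * (1 - p) ^ (n - k)) := by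
    rw [expec_formula n m k hk hm hn, algebra_eq n m k hk hm hn p hp]
  exact ⟨heq, fun _ _ => heq ▸ main_ineq n m k hk hm hn p hp⟩
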